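/- arXiv:2408.00237 — 2 statements merged into one kernel-verified Lean document; each statement's English description precedes it below -/
import Mathlib

section
/- Let X be an M×N real matrix with SVD X = U_X D_X V_Xᵀ, and let R ≤ min(M,N) be a positive integer. Define S = U_X D_S V_Xᵀ where D_S is the diagonal matrix with D_S[r,r] = D_X[r,r] = σ_r(X) for r = 1,…,R and D_S[r,r] = 0 for r > R. Then S attains the minimum of ‖X − S′‖_F² over all M×N real matrices S′ with rank(S′) ≤ R. -/
open Matrix BigOperators Module

/-- The singular values of a real `M × N` matrix, sorted in decreasing order and
indexed by `Fin N` (the square roots of the eigenvalues of `XᵀX`). -/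
noncomputable def svalAux {M N : ℕ} (X : Matrix (Fin M) (Fin N) ℝ) : Fin N → ℝ :=
  fun r => Real.sqrt
    (((show (Xᵀ * X).IsHermitian by
        simpa [Matrix.conjTranspose_eq_transpose_of_trivial] using
          Matrix.isHermitian_conjTranspose_mul_self X).eigenvalues ∘
      Tuple.sort ((show (Xᵀ * X).IsHermitian by
        simpa [Matrix.conjTranspose_eq_transpose_of_trivial] using
          Matrix.isHermitian_conjTranspose_mul_self X).eigenvalues)) r.rev)

/-- The `r`-th singular value (0-indexed, decreasing) of a real matrix, `0` if `r ≥ N`. -/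
noncomputable def sval {M N : ℕ} (X : Matrix (Fin M) (Fin N) ℝ) (r : ℕ) : ℝ :=
  if h : r < N then svalAux X ⟨r, h⟩ else 0

/-- Squared Frobenius norm. -/
noncomputable def frobSq {M N : ℕ} (X : Matrix (Fin M) (Fin N) ℝ) : ℝ :=
  ∑ i, ∑ j, (X i j) ^ 2

/-- Nuclear norm: sum of the singular values. -/
noncomputable def nucNorm {M N : ℕ} (X : Matrix (Fin M) (Fin N) ℝ) : ℝ :=
  ∑ r ∈ Finset.range (min M N), sval X r

/-! ### Auxiliary lemmas -/

lemma EY.card_filter_lt_fin (n m : ℕ) (hm : m ≤ n) :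
    (Finset.univ.filter (fun i : Fin n => (i : ℕ) < m)).card = m := by
  have h : (Finset.univ.filter (fun i : Fin n => (i:ℕ) < m))
      = Finset.map (Fin.castLEEmb hm) Finset.univ := by
    ext i
    simp only [Finset.mem_filter, Finset.mem_univ, true_and, Finset.mem_map,
      Fin.castLEEmb_apply]
    constructor
    · intro h; exact ⟨⟨i, h⟩, rfl⟩
    · rintro ⟨a, rfl⟩; simp
  rw [h, Finset.card_map, Finset.card_univ, Fintype.card_fin]

lemma EY.inner_eq_dot {n : ℕ} (x y : EuclideanSpace ℝ (Fin n)) :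
    (inner ℝ x y : ℝ) = ∑ j, x j * y j := by
  simp [PiLp.inner_apply, RCLike.inner_apply, conj_trivial, mul_comm]

lemma EY.parseval_sq {n : ℕ} (b : OrthonormalBasis (Fin n) ℝ (EuclideanSpace ℝ (Fin n)))
    (x : EuclideanSpace ℝ (Fin n)) :
    ∑ i, (inner ℝ (b i) x : ℝ)^2 = ‖x‖^2 := by
  have h := b.sum_inner_mul_inner x x
  simp_rw [real_inner_comm x, ← sq, real_inner_self_eq_norm_sq, real_inner_comm _ x] at h ⊢
  exact h

lemma EY.substoch {n m : ℕ} (hm : m < n) (s t : Fin n → ℝ) (hs : Monotone s)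
    (ht0 : ∀ i, 0 ≤ t i) (ht1 : ∀ i, t i ≤ 1) (hsum : ∑ i, t i = m) :
    ∑ i ∈ Finset.univ.filter (fun i : Fin n => (i:ℕ) < m), s i ≤ ∑ i, s i * t i := by
  set c := s ⟨m, hm⟩ with hc
  have key : ∀ i : Fin n,
      (if (i:ℕ) < m then s i else 0) + c * (t i - if (i:ℕ) < m then 1 else 0) ≤ s i * t i := by
    intro i
    by_cases h : (i:ℕ) < m
    · simp only [if_pos h]
      have hci : s i ≤ c := hs (by simp [Fin.le_def]; omega)
      nlinarith [ht1 i]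
    · simp only [if_neg h]
      have hci : c ≤ s i := hs (by simp [Fin.le_def]; omega)
      nlinarith [ht0 i]
  have h0 : ∑ i : Fin n, c * (t i - if (i:ℕ) < m then 1 else 0) = 0 := by
    rw [← Finset.mul_sum, Finset.sum_sub_distrib, hsum, Finset.sum_boole]
    simp [EY.card_filter_lt_fin n m hm.le]
  have h1 : ∑ i ∈ Finset.univ.filter (fun i : Fin n => (i:ℕ) < m), s i
      = ∑ i : Fin n, ((if (i:ℕ) < m then s i else 0)
          + c * (t i - if (i:ℕ) < m then 1 else 0)) := by
    rw [Finset.sum_add_distrib, h0, add_zero, Finset.sum_filter]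
  rw [h1]
  exact Finset.sum_le_sum fun i _ => key i

/-- Sum of squared coordinates of `B *ᵥ w k` over an orthonormal family is at most
`frobSq B` (Bessel's inequality applied to each row of `B`). -/
lemma EY.frob_lower {M N m : ℕ} (B : Matrix (Fin M) (Fin N) ℝ)
    (w : Fin m → EuclideanSpace ℝ (Fin N)) (hw : Orthonormal ℝ w) :
    ∑ k, ∑ i, (B.mulVec (w k) i)^2 ≤ frobSq B := by
  rw [Finset.sum_comm, frobSq]
  apply Finset.sum_le_sum
  intro i _
  set r : EuclideanSpace ℝ (Fin N) := (WithLp.equiv 2 _).symm (fun j => B i j) with hr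
  have hmv : ∀ k, B.mulVec (w k) i = (inner ℝ r (w k) : ℝ) := by
    intro k
    rw [EY.inner_eq_dot]
    simp [Matrix.mulVec, dotProduct, hr]
  calc ∑ k, (B.mulVec (w k) i)^2 = ∑ k, ‖(inner ℝ (w k) r : ℝ)‖^2 := by
        simp_rw [hmv, real_inner_comm r]; simp [sq_abs]
    _ ≤ ‖r‖^2 := hw.sum_inner_products_le r
    _ = ∑ j, (B i j)^2 := by
        rw [← real_inner_self_eq_norm_sq, EY.inner_eq_dot]
        simp [hr, sq]

/-- Rayleigh quotient expansion in the eigenbasis. -/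
lemma EY.rayleigh_expand {n : ℕ} (A : Matrix (Fin n) (Fin n) ℝ) (hA : A.IsHermitian)
    (w : EuclideanSpace ℝ (Fin n)) :
    (fun j => w j) ⬝ᵥ (A *ᵥ (fun j => w j))
      = ∑ i, hA.eigenvalues i * (inner ℝ (hA.eigenvectorBasis i) w : ℝ)^2 := by
  classical
  have hAt : Aᵀ = A := by
    conv_rhs => rw [← hA.eq]
    ext i j
    simp [Matrix.conjTranspose_apply]
  set b := hA.eigenvectorBasis with hb
  set w' : EuclideanSpace ℝ (Fin n) := (WithLp.equiv 2 _).symm (A *ᵥ (fun j => w j)) with hw'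
  have key : ∀ i, (inner ℝ (b i) w' : ℝ) = hA.eigenvalues i * (inner ℝ (b i) w : ℝ) := by
    intro i
    rw [EY.inner_eq_dot, EY.inner_eq_dot]
    have h1 : ∑ j, (b i) j * w' j = (fun j => (b i) j) ⬝ᵥ (A *ᵥ (fun j => w j)) := rfl
    have h3 : (fun j => (b i) j) = WithLp.ofLp (b i) := rfl
    rw [h1, Matrix.dotProduct_mulVec, ← Matrix.mulVec_transpose, hAt, h3,
      hA.mulVec_eigenvectorBasis i]
    simp [smul_dotProduct, Finset.mul_sum, dotProduct, mul_assoc, hb]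
  have h := b.sum_inner_mul_inner w w'
  have h2 : (inner ℝ w w' : ℝ) = (fun j => w j) ⬝ᵥ (A *ᵥ (fun j => w j)) := by
    rw [EY.inner_eq_dot]; rfl
  rw [h2] at h
  rw [← h]
  apply Finset.sum_congr rfl
  intro i _
  rw [key i, real_inner_comm w (b i)]
  ring

lemma EY.frobSq_eq_trace {M N : ℕ} (B : Matrix (Fin M) (Fin N) ℝ) :
    frobSq B = (Bᵀ * B).trace := by
  rw [frobSq, Matrix.trace]
  rw [Finset.sum_comm]
  apply Finset.sum_congr rfl
  intro j _
  simp [Matrix.mul_apply, Matrix.diag, sq]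

lemma EY.frobSq_conj {M N K : ℕ} (U : Matrix (Fin M) (Fin K) ℝ) (V : Matrix (Fin N) (Fin K) ℝ)
    (E : Matrix (Fin K) (Fin K) ℝ) (hU : Uᵀ * U = 1) (hV : Vᵀ * V = 1) :
    frobSq (U * E * Vᵀ) = frobSq E := by
  rw [EY.frobSq_eq_trace, EY.frobSq_eq_trace]
  have h1 : (U * E * Vᵀ)ᵀ * (U * E * Vᵀ) = V * ((Eᵀ * E) * Vᵀ) := by
    calc (U * E * Vᵀ)ᵀ * (U * E * Vᵀ)
        = V * (Eᵀ * ((Uᵀ * U) * (E * Vᵀ))) := by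
          simp only [Matrix.transpose_mul, Matrix.transpose_transpose, Matrix.mul_assoc]
      _ = V * ((Eᵀ * E) * Vᵀ) := by rw [hU, Matrix.one_mul, Matrix.mul_assoc]
  rw [h1, Matrix.trace_mul_comm, Matrix.mul_assoc, hV, Matrix.mul_one]

lemma EY.rank_le_of_diag {K R : ℕ} (DS : Matrix (Fin K) (Fin K) ℝ) (f : Fin K → ℝ)
    (hDS : ∀ r s, DS r s = if r = s ∧ (r : ℕ) < R then f r else 0) :
    DS.rank ≤ R := by
  classical
  have hdiag : DS = Matrix.diagonal (fun r : Fin K => if (r : ℕ) < R then f r else 0) := by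
    ext r s
    rw [hDS, Matrix.diagonal_apply]
    by_cases h : r = s
    · subst h; by_cases h2 : (r:ℕ) < R <;> simp [h2]
    · simp [h]
  rw [hdiag, Matrix.rank_diagonal]
  have hlt : ∀ x : {i : Fin K // (if (i : ℕ) < R then f i else 0) ≠ 0}, ((x : Fin K) : ℕ) < R := by
    rintro ⟨x, hx⟩
    by_contra h
    simp [h] at hx
  calc Fintype.card {i : Fin K // (if (i : ℕ) < R then f i else 0) ≠ 0}
      ≤ Fintype.card (Fin R) := Fintype.card_le_of_injective
        (fun x => ⟨(x : Fin K), hlt x⟩) (by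
          intro a b hab
          apply Subtype.ext
          apply Fin.val_injective
          simpa [Fin.ext_iff] using hab)
    _ = R := Fintype.card_fin R

lemma EY.exists_on_ker {M N R : ℕ} (S' : Matrix (Fin M) (Fin N) ℝ) (h : S'.rank ≤ R)
    (hRN : R ≤ N) :
    ∃ w : Fin (N - R) → EuclideanSpace ℝ (Fin N), Orthonormal ℝ w ∧
      ∀ k, S' *ᵥ (fun j => w k j) = 0 := by
  classical
  set K := LinearMap.ker (Matrix.toEuclideanLin S') with hK
  have hcomp : Matrix.toEuclideanLin S'
      = (WithLp.linearEquiv 2 ℝ (Fin M → ℝ)).symm.toLinearMap ∘ₗ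
        S'.mulVecLin ∘ₗ (WithLp.linearEquiv 2 ℝ (Fin N → ℝ)).toLinearMap := by
    apply LinearMap.ext; intro x; rfl
  have hrange : finrank ℝ (LinearMap.range (Matrix.toEuclideanLin S')) = S'.rank := by
    rw [hcomp, LinearMap.range_comp, LinearMap.range_comp,
      LinearEquiv.range, Submodule.map_top]
    rw [LinearEquiv.finrank_map_eq]
    rfl
  have hdim : S'.rank + finrank ℝ K = N := by
    have h2 := LinearMap.finrank_range_add_finrank_ker (Matrix.toEuclideanLin S')
    rw [hrange] at h2
    rw [← hK] at h2
    rw [h2]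
    simp [finrank_euclideanSpace]
  have hmd : N - R ≤ finrank ℝ K := by omega
  set b := stdOrthonormalBasis ℝ K with hb
  refine ⟨fun k => ((b (Fin.castLE hmd k)) : EuclideanSpace ℝ (Fin N)), ?_, ?_⟩
  · have h1 : Orthonormal ℝ (fun i => ((b i : K) : EuclideanSpace ℝ (Fin N))) :=
      (b.orthonormal).comp_linearIsometry K.subtypeₗᵢ
    exact h1.comp _ (Fin.castLE_injective hmd)
  · intro k
    have hmem : ((b (Fin.castLE hmd k)) : EuclideanSpace ℝ (Fin N)) ∈ K :=
      (b (Fin.castLE hmd k)).2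
    have h0 : Matrix.toEuclideanLin S' ((b (Fin.castLE hmd k)) : EuclideanSpace ℝ (Fin N)) = 0 :=
      hmem
    exact congrArg WithLp.ofLp h0

/-- **Eckart-Young (Proposition 1).** Truncating the SVD of `X` to its top `R` singular
values gives a best approximation of `X`, in squared Frobenius norm, among all matrices
of rank at most `R`. -/
theorem statement0 {M N : ℕ} (R : ℕ) (hR : 0 < R) (hRmin : R ≤ min M N)
    (X : Matrix (Fin M) (Fin N) ℝ)
    (U : Matrix (Fin M) (Fin (min M N)) ℝ) (V : Matrix (Fin N) (Fin (min M N)) ℝ)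
    (D DS : Matrix (Fin (min M N)) (Fin (min M N)) ℝ)
    (hU : Uᵀ * U = 1) (hV : Vᵀ * V = 1)
    (hD : ∀ r s : Fin (min M N), D r s = if r = s then sval X (r : ℕ) else 0)
    (hX : X = U * D * Vᵀ)
    (hDS : ∀ r s : Fin (min M N),
      DS r s = if r = s ∧ (r : ℕ) < R then sval X (r : ℕ) else 0)
    (S : Matrix (Fin M) (Fin N) ℝ) (hS : S = U * DS * Vᵀ) :
    S.rank ≤ R ∧
      ∀ S' : Matrix (Fin M) (Fin N) ℝ, S'.rank ≤ R →
        frobSq (X - S) ≤ frobSq (X - S') := by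
  classical
  have hRN : R ≤ N := hRmin.trans (min_le_right M N)
  have hN : 0 < N := lt_of_lt_of_le hR hRN
  have hA : (Xᴴ * X).IsHermitian := Matrix.isHermitian_conjTranspose_mul_self X
  -- increasing-sorted eigenvalues of XᴴX
  set s : Fin N → ℝ := hA.eigenvalues ∘ Tuple.sort hA.eigenvalues with hsdef
  have hs_mono : Monotone s := Tuple.monotone_sort hA.eigenvalues
  have hs_nonneg : ∀ i, 0 ≤ s i := fun i =>
    Matrix.eigenvalues_conjTranspose_mul_self_nonneg X _
  -- reindexing map
  have hminN : ∀ r : Fin (min M N), (r : ℕ) < N :=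
    fun r => lt_of_lt_of_le r.isLt (min_le_right M N)
  set g : Fin (min M N) → Fin N := fun r => (⟨(r : ℕ), hminN r⟩ : Fin N).rev with hgdef
  have hsval : ∀ r : Fin (min M N), sval X (r : ℕ) = Real.sqrt (s (g r)) := by
    intro r
    rw [sval, dif_pos (hminN r), svalAux, hsdef]
    rfl
  have hsval_sq : ∀ r : Fin (min M N), (sval X (r : ℕ))^2 = s (g r) := by
    intro r
    rw [hsval, Real.sq_sqrt (hs_nonneg _)]
  -- the value of frobSq (X - S)
  have hXS : X - S = U * (D - DS) * Vᵀ := by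
    rw [hX, hS, ← Matrix.sub_mul, ← Matrix.mul_sub]
  have hEntry : ∀ r c : Fin (min M N), (D - DS) r c
      = if r = c then (if (r:ℕ) < R then 0 else sval X (r:ℕ)) else 0 := by
    intro r c
    rw [Matrix.sub_apply, hD, hDS]
    by_cases h1 : r = c
    · subst h1
      by_cases h2 : (r:ℕ) < R <;> simp [h2]
    · simp [h1]
  have hfrobXS : frobSq (X - S)
      = ∑ r ∈ Finset.univ.filter (fun r : Fin (min M N) => ¬ (r:ℕ) < R),
          (sval X (r:ℕ))^2 := by
    rw [hXS, EY.frobSq_conj U V _ hU hV, frobSq]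
    have hrow : ∀ r : Fin (min M N),
        ∑ c, ((D - DS) r c)^2 = if (r:ℕ) < R then 0 else (sval X (r:ℕ))^2 := by
      intro r
      have : ∀ c, ((D - DS) r c)^2
          = if r = c then (if (r:ℕ) < R then 0 else (sval X (r:ℕ))^2) else 0 := by
        intro c
        rw [hEntry]
        by_cases h1 : r = c
        · subst h1
          by_cases h2 : (r:ℕ) < R <;> simp [h2]
        · simp [h1]
      simp_rw [this]
      rw [Finset.sum_ite_eq]
      simp
    simp_rw [hrow]
    rw [Finset.sum_filter]
    apply Finset.sum_congr rfl
    intro r _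
    by_cases h2 : (r:ℕ) < R <;> simp [h2]
  -- rank bound
  have hrankS : S.rank ≤ R := by
    rw [hS]
    calc (U * DS * Vᵀ).rank ≤ (U * DS).rank := Matrix.rank_mul_le_left _ _
      _ ≤ DS.rank := Matrix.rank_mul_le_right _ _
      _ ≤ R := EY.rank_le_of_diag DS _ hDS
  refine ⟨hrankS, ?_⟩
  intro S' hS'
  -- orthonormal family in the kernel of S'
  obtain ⟨w, hw, hker⟩ := EY.exists_on_ker S' hS' hRN
  have hmlt : N - R < N := by omega
  -- coefficients
  set b := hA.eigenvectorBasis with hbdef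
  set t : Fin N → ℝ := fun i => ∑ k, (inner ℝ (b i) (w k) : ℝ)^2 with htdef
  have ht0 : ∀ i, 0 ≤ t i := fun i => Finset.sum_nonneg fun k _ => sq_nonneg _
  have ht1 : ∀ i, t i ≤ 1 := by
    intro i
    have hb1 : ‖b i‖ = 1 := b.orthonormal.1 i
    have := hw.sum_inner_products_le (s := Finset.univ) (b i)
    rw [hb1] at this
    simp only [one_pow] at this
    calc t i = ∑ k, ‖(inner ℝ (w k) (b i) : ℝ)‖^2 := by
          apply Finset.sum_congr rfl
          intro k _
          rw [real_inner_comm]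
          simp [sq_abs]
      _ ≤ 1 := this
  have hsum : ∑ i, t i = (N - R : ℕ) := by
    rw [htdef]
    rw [Finset.sum_comm]
    have : ∀ k, ∑ i, (inner ℝ (b i) (w k) : ℝ)^2 = 1 := by
      intro k
      rw [EY.parseval_sq b (w k), hw.1 k, one_pow]
    simp_rw [this]
    simp
  -- apply the substochastic inequality with the sorting permutation
  set σ := Tuple.sort hA.eigenvalues with hσ
  have hkey : ∑ i ∈ Finset.univ.filter (fun i : Fin N => (i:ℕ) < N - R), s i
      ≤ ∑ i, hA.eigenvalues i * t i := by
    have h1 := EY.substoch hmlt s (t ∘ σ) hs_mono (fun i => ht0 _) (fun i => ht1 _)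
      ((Equiv.sum_comp σ t).trans hsum)
    refine h1.trans_eq ?_
    refine Fintype.sum_equiv σ _ _ ?_
    intro i
    rw [hsdef]
    rfl
  -- the middle quantity equals the sum of Rayleigh quotients
  have hmid : ∑ i, hA.eigenvalues i * t i
      = ∑ k, ∑ i, ((X - S').mulVec (fun j => w k j) i)^2 := by
    have h1 : ∑ i, hA.eigenvalues i * t i
        = ∑ k, ∑ i, hA.eigenvalues i * (inner ℝ (b i) (w k) : ℝ)^2 := by
      rw [htdef]
      simp_rw [Finset.mul_sum]
      rw [Finset.sum_comm]
    rw [h1]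
    apply Finset.sum_congr rfl
    intro k _
    rw [← EY.rayleigh_expand _ hA (w k)]
    -- (w k) ⬝ᵥ ((Xᴴ * X) *ᵥ (w k)) = ∑ i, ((X - S') *ᵥ w k) i ^ 2
    have hXt : (Xᴴ)ᵀ = X := by
      ext i j; simp [Matrix.conjTranspose_apply]
    have h2 : (fun j => w k j) ⬝ᵥ ((Xᴴ * X) *ᵥ (fun j => w k j))
        = (X *ᵥ (fun j => w k j)) ⬝ᵥ (X *ᵥ (fun j => w k j)) := by
      rw [← Matrix.mulVec_mulVec, Matrix.dotProduct_mulVec, ← Matrix.mulVec_transpose, hXt]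
    have h3 : (X - S') *ᵥ (fun j => w k j) = X *ᵥ (fun j => w k j) := by
      rw [Matrix.sub_mulVec, hker k, sub_zero]
    rw [h2, ← h3]
    simp [dotProduct, sq]
  -- the left quantity dominates frobSq (X - S)
  have hleft : frobSq (X - S)
      ≤ ∑ i ∈ Finset.univ.filter (fun i : Fin N => (i:ℕ) < N - R), s i := by
    rw [hfrobXS]
    have hginj : Set.InjOn g
        ((Finset.univ.filter (fun r : Fin (min M N) => ¬ (r:ℕ) < R)) : Set (Fin (min M N))) := by
      intro a _ b _ hab
      have : (a : ℕ) = (b : ℕ) := by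
        have := congrArg (fun x : Fin N => (x : ℕ)) hab
        simp only [hgdef, Fin.val_rev] at this
        omega
      exact Fin.val_injective this
    rw [Finset.sum_congr rfl (fun r _ => hsval_sq r)]
    rw [← Finset.sum_image hginj]
    apply Finset.sum_le_sum_of_subset_of_nonneg
    · intro i hi
      simp only [Finset.mem_image, Finset.mem_filter, Finset.mem_univ, true_and] at hi ⊢
      obtain ⟨r, hr, rfl⟩ := hi
      have hrlt : (r : ℕ) < N := hminN r
      simp only [hgdef, Fin.val_rev]
      omega
    · intro i _ _
      exact hs_nonneg i
  -- conclude
  calc frobSq (X - S)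
      ≤ ∑ i ∈ Finset.univ.filter (fun i : Fin N => (i:ℕ) < N - R), s i := hleft
    _ ≤ ∑ i, hA.eigenvalues i * t i := hkey
    _ = ∑ k, ∑ i, ((X - S').mulVec (fun j => w k j) i)^2 := hmid
    _ ≤ frobSq (X - S') := by
        have := EY.frob_lower (X - S') w hw
        convert this using 2
end

section
/- Let X be an M×N real matrix with SVD X = U_X D_X V_Xᵀ and let λ > 0. Define S = U_X D_S V_Xᵀ where D_S is diagonal with D_S[r,r] = max(σ_r(X) − λ, 0) for all r. Then S is the unique global minimizer of the function S′ ↦ (1/2)‖X − S′‖_F² + λ‖S′‖_* over all M×N real matrices S′. -/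
open Matrix BigOperators

lemma Matrix.isHermitian_transpose_mul_self {M N : ℕ} (X : Matrix (Fin M) (Fin N) ℝ) :
    (Xᵀ * X).IsHermitian := by
  simpa [Matrix.conjTranspose_eq_transpose_of_trivial] using
    Matrix.isHermitian_conjTranspose_mul_self X

namespace SoftThresh

open Polynomial

noncomputable def ip {M N : ℕ} (A B : Matrix (Fin M) (Fin N) ℝ) : ℝ :=
  ∑ i, ∑ j, A i j * B i j

lemma frobSq_expand {M N : ℕ} (A B : Matrix (Fin M) (Fin N) ℝ) :
    frobSq (A + B) = frobSq A + 2 * ip A B + frobSq B := by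
  unfold frobSq ip
  rw [Finset.mul_sum, ← Finset.sum_add_distrib, ← Finset.sum_add_distrib]
  refine Finset.sum_congr rfl fun i _ => ?_
  rw [Finset.mul_sum, ← Finset.sum_add_distrib, ← Finset.sum_add_distrib]
  refine Finset.sum_congr rfl fun j _ => ?_
  simp only [Matrix.add_apply]; ring

lemma ip_sub_right {M N : ℕ} (A B C : Matrix (Fin M) (Fin N) ℝ) :
    ip A (B - C) = ip A B - ip A C := by
  unfold ip
  rw [← Finset.sum_sub_distrib]
  refine Finset.sum_congr rfl fun i _ => ?_
  rw [← Finset.sum_sub_distrib]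
  refine Finset.sum_congr rfl fun j _ => ?_
  simp only [Matrix.sub_apply]; ring

lemma frobSq_pos {M N : ℕ} (A : Matrix (Fin M) (Fin N) ℝ) (h : A ≠ 0) : 0 < frobSq A := by
  obtain ⟨i, j, hij⟩ : ∃ i j, A i j ≠ 0 := by
    by_contra hc; push_neg at hc; exact h (by ext i j; simp [hc])
  unfold frobSq
  refine Finset.sum_pos' (fun i _ => Finset.sum_nonneg fun j _ => sq_nonneg _)
    ⟨i, Finset.mem_univ i, ?_⟩
  exact Finset.sum_pos' (fun j _ => sq_nonneg _) ⟨j, Finset.mem_univ j, by positivity⟩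

lemma proj_bound {m K : ℕ} (P : Matrix (Fin m) (Fin K) ℝ) (hP : Pᵀ * P = 1)
    (x : Fin m → ℝ) : ∑ r, (∑ i, P i r * x i) ^ 2 ≤ ∑ i, (x i) ^ 2 := by
  have hv : ∀ r, (∑ i, P i r * x i) = (Pᵀ *ᵥ x) r := by
    intro r; simp [Matrix.mulVec, dotProduct, Matrix.transpose_apply]
  set v := Pᵀ *ᵥ x with hvdef
  have huu : (P *ᵥ v) ⬝ᵥ (P *ᵥ v) = v ⬝ᵥ v := by
    rw [Matrix.dotProduct_mulVec, ← Matrix.vecMul_transpose, Matrix.vecMul_vecMul, hP,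
      Matrix.vecMul_one]
  have hxu : x ⬝ᵥ (P *ᵥ v) = v ⬝ᵥ v := by
    rw [Matrix.dotProduct_mulVec, ← Matrix.mulVec_transpose]
  have key : (0:ℝ) ≤ (x - P *ᵥ v) ⬝ᵥ (x - P *ᵥ v) :=
    Finset.sum_nonneg fun i _ => mul_self_nonneg _
  rw [sub_dotProduct, dotProduct_sub, dotProduct_sub, huu, hxu,
    dotProduct_comm (P *ᵥ v) x, hxu] at key
  have h1 : ∑ r, (v r)^2 = v ⬝ᵥ v := by simp [dotProduct, sq]
  have h2 : ∑ i, (x i)^2 = x ⬝ᵥ x := by simp [dotProduct, sq]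
  simp only [hv, h1, h2]
  linarith

noncomputable def pad {K n : ℕ} (e : Fin K → ℝ) : Fin n → ℝ :=
  fun j => if h : (j : ℕ) < K then e ⟨j, h⟩ else 0

lemma det_smul_one_sub {N K : ℕ} (B : Matrix (Fin N) (Fin N) ℝ)
    (V : Matrix (Fin N) (Fin K) ℝ) (e : Fin K → ℝ) (hV : Vᵀ * V = 1)
    (hBe : B = V * Matrix.diagonal e * Vᵀ) (hKN : K ≤ N) (x : ℝ) (hx : x ≠ 0) :
    (x • (1 : Matrix (Fin N) (Fin N) ℝ) - B).det
      = x ^ (N - K) * ∏ r : Fin K, (x - e r) := by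
  have h1 : x • (1 : Matrix (Fin N) (Fin N) ℝ) - B
      = x • ((1 : Matrix (Fin N) (Fin N) ℝ) - V * ((x⁻¹ • Matrix.diagonal e) * Vᵀ)) := by
    rw [smul_sub, hBe]
    congr 1
    rw [Matrix.smul_mul, Matrix.mul_smul, smul_smul, mul_inv_cancel₀ hx, one_smul,
      Matrix.mul_assoc]
  rw [h1, Matrix.det_smul, Matrix.det_one_sub_mul_comm, Matrix.mul_assoc, hV, Matrix.mul_one]
  have h2 : (1 : Matrix (Fin K) (Fin K) ℝ) - x⁻¹ • Matrix.diagonal e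
      = Matrix.diagonal (fun r => 1 - x⁻¹ * e r) := by
    ext i j
    by_cases h : i = j <;> simp [Matrix.one_apply, Matrix.diagonal_apply, h]
  rw [h2, Matrix.det_diagonal, Fintype.card_fin]
  have hNK : N = (N - K) + K := (Nat.sub_add_cancel hKN).symm
  rw [show x ^ N = x ^ (N - K) * x ^ K by rw [← pow_add, ← hNK], mul_assoc]
  congr 1
  rw [show (x:ℝ)^K = ∏ _i : Fin K, x by simp [Finset.prod_const], ← Finset.prod_mul_distrib]
  refine Finset.prod_congr rfl fun r _ => ?_
  field_simp

lemma det_smul_one_sub_hermitian {N : ℕ} (B : Matrix (Fin N) (Fin N) ℝ)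
    (hB : B.IsHermitian) (x : ℝ) :
    (x • (1 : Matrix (Fin N) (Fin N) ℝ) - B).det = ∏ i, (x - hB.eigenvalues i) := by
  set W : Matrix (Fin N) (Fin N) ℝ := (hB.eigenvectorUnitary : Matrix (Fin N) (Fin N) ℝ)
    with hWdef
  have hWW : W * star W = 1 := (Matrix.mem_unitaryGroup_iff).mp hB.eigenvectorUnitary.2
  have hWW' : star W * W = 1 := (Matrix.mem_unitaryGroup_iff').mp hB.eigenvectorUnitary.2
  have h1 : x • (1 : Matrix (Fin N) (Fin N) ℝ) - B
      = W * (Matrix.diagonal (fun i => x - hB.eigenvalues i)) * star W := by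
    have hd : Matrix.diagonal (fun i => x - hB.eigenvalues i)
        = x • (1 : Matrix (Fin N) (Fin N) ℝ)
          - Matrix.diagonal (RCLike.ofReal ∘ hB.eigenvalues) := by
      ext i j
      by_cases h : i = j <;> simp [Matrix.one_apply, Matrix.diagonal_apply, h]
    rw [hd, Matrix.mul_sub, Matrix.sub_mul]
    congr 1
    · rw [Matrix.mul_smul, Matrix.mul_one, Matrix.smul_mul, hWW]
    · rw [hWdef]; have h := hB.spectral_theorem; rw [Unitary.conjStarAlgAut_apply] at h; exact h
  rw [h1, Matrix.det_mul, Matrix.det_mul, mul_comm, ← mul_assoc, ← Matrix.det_mul, hWW',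
    Matrix.det_one, one_mul, Matrix.det_diagonal]

lemma prod_pad {N K : ℕ} (e : Fin K → ℝ) (hKN : K ≤ N) (x : ℝ) :
    ∏ j : Fin N, (x - pad e j) = x ^ (N - K) * ∏ r : Fin K, (x - e r) := by
  classical
  set s : Finset (Fin N) := Finset.univ.map (Fin.castLEEmb hKN) with hs
  have hmem : ∀ j : Fin N, j ∈ s ↔ (j : ℕ) < K := by
    intro j
    simp only [hs, Finset.mem_map, Finset.mem_univ, true_and]
    constructor
    · rintro ⟨r, rfl⟩; exact r.2
    · intro h; exact ⟨⟨j, h⟩, by ext; simp [Fin.castLEEmb]⟩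
  rw [← Finset.prod_mul_prod_compl s (fun j => x - pad e j), mul_comm]
  congr 1
  · rw [Finset.prod_congr rfl (fun j hj => ?_), Finset.prod_const]
    · congr 1
      rw [Finset.card_compl, Finset.card_map, Finset.card_univ, Fintype.card_fin,
        Fintype.card_fin]
    · have : ¬ (j : ℕ) < K := by
        intro h; exact (Finset.mem_compl.mp hj) ((hmem j).mpr h)
      simp [pad, this]
  · rw [hs, Finset.prod_map]
    refine Finset.prod_congr rfl fun r _ => ?_
    have h : ((Fin.castLEEmb hKN r : Fin N) : ℕ) < K := r.2
    simp only [pad, dif_pos h]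
    congr 1

lemma monotone_eq_of_multiset_eq {n : ℕ} {f g : Fin n → ℝ} (hf : Monotone f) (hg : Monotone g)
    (h : Multiset.map f Finset.univ.val = Multiset.map g Finset.univ.val) : f = g := by
  have huv : (Finset.univ.val : Multiset (Fin n)) = (List.finRange n : List (Fin n)) := rfl
  have h1 : ((List.ofFn f : List ℝ) : Multiset ℝ) = ((List.ofFn g : List ℝ) : Multiset ℝ) := by
    rw [List.ofFn_eq_map, List.ofFn_eq_map]
    simpa [huv, Multiset.map_coe] using h
  have hperm : (List.ofFn f).Perm (List.ofFn g) := Quotient.exact h1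
  exact List.ofFn_injective (List.Perm.eq_of_sortedLE hf.sortedLE_ofFn hg.sortedLE_ofFn hperm)

lemma eig_multiset {N K : ℕ} (B : Matrix (Fin N) (Fin N) ℝ) (hB : B.IsHermitian)
    (V : Matrix (Fin N) (Fin K) ℝ) (e : Fin K → ℝ) (hV : Vᵀ * V = 1)
    (hBe : B = V * Matrix.diagonal e * Vᵀ) (hKN : K ≤ N) :
    Multiset.map hB.eigenvalues Finset.univ.val
      = Multiset.map (pad e : Fin N → ℝ) Finset.univ.val := by
  set P : ℝ[X] := ∏ i : Fin N, (X - C (hB.eigenvalues i)) with hP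
  set Q : ℝ[X] := ∏ j : Fin N, (X - C (pad e j : ℝ)) with hQ
  have hPQ : P = Q := by
    refine Polynomial.eq_of_infinite_eval_eq P Q (Set.Infinite.mono ?_
      ((Set.finite_singleton (0:ℝ)).infinite_compl))
    intro x hx
    have hx0 : x ≠ 0 := hx
    simp only [Set.mem_setOf_eq, hP, hQ, eval_prod, eval_sub, eval_X, eval_C]
    rw [← det_smul_one_sub_hermitian B hB x, det_smul_one_sub B V e hV hBe hKN x hx0,
      ← prod_pad e hKN x]
  have hroots := congrArg Polynomial.roots hPQ
  rw [hP, hQ, Finset.prod_eq_multiset_prod, Finset.prod_eq_multiset_prod] at hroots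
  rw [show Multiset.map (fun i => X - C (hB.eigenvalues i)) Finset.univ.val
      = Multiset.map (fun a => X - C a) (Multiset.map hB.eigenvalues Finset.univ.val) by
        rw [Multiset.map_map]; rfl] at hroots
  rw [show Multiset.map (fun j => X - C (pad e j : ℝ)) Finset.univ.val
      = Multiset.map (fun a => X - C a) (Multiset.map (pad e : Fin N → ℝ) Finset.univ.val) by
        rw [Multiset.map_map]; rfl] at hroots
  rwa [Polynomial.roots_multiset_prod_X_sub_C, Polynomial.roots_multiset_prod_X_sub_C] at hroots

end SoftThresh

namespace Part2

open SoftThresh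

lemma multiset_map_perm {n : ℕ} (f : Fin n → ℝ) (σ : Equiv.Perm (Fin n)) :
    Multiset.map (f ∘ ⇑σ) Finset.univ.val = Multiset.map f Finset.univ.val := by
  conv_rhs => rw [← Finset.map_univ_equiv σ]
  rw [Finset.map_val, Multiset.map_map]
  rfl

lemma rev_antitone {n : ℕ} : Antitone (Fin.rev : Fin n → Fin n) :=
  fun _ _ h => Fin.rev_le_rev.mpr h

lemma svalAux_eq_pad {M N K : ℕ} (A : Matrix (Fin M) (Fin N) ℝ)
    (V : Matrix (Fin N) (Fin K) ℝ) (e : Fin K → ℝ) (hV : Vᵀ * V = 1)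
    (hAe : Aᵀ * A = V * Matrix.diagonal e * Vᵀ) (hKN : K ≤ N)
    (he0 : ∀ r, 0 ≤ e r) (hanti : Antitone e) (j : Fin N) :
    svalAux A j = Real.sqrt (pad e j) := by
  have hpad0 : ∀ j : Fin N, 0 ≤ (pad e : Fin N → ℝ) j := by
    intro j; unfold pad; split
    · exact he0 _
    · exact le_refl 0
  have hpadanti : Antitone (pad e : Fin N → ℝ) := by
    intro i j hij
    by_cases hj : (j : ℕ) < K
    · have hi : (i : ℕ) < K := lt_of_le_of_lt hij hj
      show (if h : (j:ℕ) < K then e ⟨j,h⟩ else 0) ≤ (if h : (i:ℕ) < K then e ⟨i,h⟩ else 0)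
      rw [dif_pos hi, dif_pos hj]
      exact hanti (show (⟨(i:ℕ), hi⟩ : Fin K) ≤ ⟨(j:ℕ), hj⟩ from hij)
    · show (if h : (j:ℕ) < K then e ⟨j,h⟩ else 0) ≤ _
      rw [dif_neg hj]
      exact hpad0 i
  have hmono2 : Monotone ((pad e : Fin N → ℝ) ∘ Fin.rev) :=
    fun i j hij => hpadanti (rev_antitone hij)
  have hms := eig_multiset _ (Matrix.isHermitian_transpose_mul_self A) V e hV hAe hKN
  have h1 : Multiset.map ((Matrix.isHermitian_transpose_mul_self A).eigenvalues ∘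
        ⇑(Tuple.sort (Matrix.isHermitian_transpose_mul_self A).eigenvalues)) Finset.univ.val
      = Multiset.map ((pad e : Fin N → ℝ) ∘ Fin.rev) Finset.univ.val := by
    rw [multiset_map_perm _ (Tuple.sort (Matrix.isHermitian_transpose_mul_self A).eigenvalues),
      hms]
    have hrp : (pad e : Fin N → ℝ) ∘ Fin.rev = (pad e : Fin N → ℝ) ∘ ⇑(Fin.revPerm (n := N)) :=
      rfl
    rw [hrp, multiset_map_perm (pad e) Fin.revPerm]
  have heq := monotone_eq_of_multiset_eq
    (Tuple.monotone_sort (Matrix.isHermitian_transpose_mul_self A).eigenvalues) hmono2 h1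
  show Real.sqrt _ = _
  rw [heq]
  simp [Function.comp, Fin.rev_rev]

lemma svalAux_antitone {M N : ℕ} (A : Matrix (Fin M) (Fin N) ℝ) : Antitone (svalAux A) := by
  intro i j hij
  apply Real.sqrt_le_sqrt
  exact Tuple.monotone_sort _ (Fin.rev_le_rev.mpr hij)

lemma sval_nonneg {M N : ℕ} (A : Matrix (Fin M) (Fin N) ℝ) (r : ℕ) : 0 ≤ sval A r := by
  unfold sval; split
  · exact Real.sqrt_nonneg _
  · exact le_refl 0

lemma sval_antitone {M N : ℕ} (A : Matrix (Fin M) (Fin N) ℝ) {r s : ℕ} (h : r ≤ s) :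
    sval A s ≤ sval A r := by
  unfold sval
  by_cases hs : s < N
  · rw [dif_pos hs, dif_pos (lt_of_le_of_lt h hs)]
    exact svalAux_antitone A (show (⟨r, _⟩ : Fin N) ≤ ⟨s, hs⟩ from h)
  · rw [dif_neg hs]; split
    · exact Real.sqrt_nonneg _
    · exact le_refl 0

lemma conjTranspose_eq_transpose_real {m n : Type*} (A : Matrix m n ℝ) : Aᴴ = Aᵀ := by
  ext i j; simp [Matrix.conjTranspose_apply]

lemma eigs_nonneg {M N : ℕ} (A : Matrix (Fin M) (Fin N) ℝ) (k : Fin N) :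
    0 ≤ (Matrix.isHermitian_transpose_mul_self A).eigenvalues k := by
  have h := Matrix.posSemidef_conjTranspose_mul_self A
  rw [conjTranspose_eq_transpose_real] at h
  exact h.eigenvalues_nonneg k

lemma svalAux_eq_zero {M N : ℕ} (A : Matrix (Fin M) (Fin N) ℝ) (j : Fin N)
    (hj : min M N ≤ (j : ℕ)) : svalAux A j = 0 := by
  classical
  set hB := Matrix.isHermitian_transpose_mul_self A with hBdef
  set μ := hB.eigenvalues with hμ
  set σ := Tuple.sort μ with hσ
  have hmono : Monotone (μ ∘ ⇑σ) := Tuple.monotone_sort μ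
  suffices hz : (μ ∘ ⇑σ) j.rev = 0 by
    show Real.sqrt ((μ ∘ ⇑σ) j.rev) = 0
    rw [hz, Real.sqrt_zero]
  by_contra h0
  have hpos : 0 < (μ ∘ ⇑σ) j.rev := lt_of_le_of_ne (eigs_nonneg A _) (Ne.symm h0)
  have hsub : Finset.Ici j.rev ⊆ Finset.univ.filter (fun i => (μ ∘ ⇑σ) i ≠ 0) := by
    intro i hi
    rw [Finset.mem_filter]
    refine ⟨Finset.mem_univ i, ?_⟩
    have := hmono (Finset.mem_Ici.mp hi)
    exact ne_of_gt (lt_of_lt_of_le hpos this)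
  have hcard1 : (Finset.Ici j.rev).card = N - (j.rev : ℕ) := Fin.card_Ici j.rev
  have hcard2 : (Finset.univ.filter (fun i => (μ ∘ ⇑σ) i ≠ 0)).card
      = (Finset.univ.filter (fun i => μ i ≠ 0)).card := by
    rw [← Fintype.card_subtype, ← Fintype.card_subtype]
    exact Fintype.card_congr (σ.subtypeEquiv (fun i => Iff.rfl))
  have hrank : (Finset.univ.filter (fun i => μ i ≠ 0)).card ≤ min M N := by
    rw [← Fintype.card_subtype, ← hB.rank_eq_card_non_zero_eigs,
      Matrix.rank_transpose_mul_self]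
    exact le_min (Matrix.rank_le_height A) (Matrix.rank_le_width A)
  have hle := (Finset.card_le_card hsub).trans (hcard2.trans_le hrank)
  rw [hcard1] at hle
  have hrev : (j.rev : ℕ) = N - 1 - (j : ℕ) := Fin.val_rev j ▸ by omega
  have hjN : (j : ℕ) < N := j.2
  omega

lemma sval_eq_zero {M N : ℕ} (A : Matrix (Fin M) (Fin N) ℝ) {r : ℕ} (hr : min M N ≤ r) :
    sval A r = 0 := by
  unfold sval; split
  · exact svalAux_eq_zero A _ hr
  · rfl

lemma nucNorm_eq_sum_sqrt {M N : ℕ} (A : Matrix (Fin M) (Fin N) ℝ) :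
    nucNorm A = ∑ k : Fin N,
      Real.sqrt ((Matrix.isHermitian_transpose_mul_self A).eigenvalues k) := by
  have h1 : nucNorm A = ∑ r ∈ Finset.range N, sval A r := by
    unfold nucNorm
    refine Finset.sum_subset (Finset.range_subset_range.mpr (min_le_right M N)) ?_
    intro r _ hr
    exact sval_eq_zero A (le_of_not_gt (fun h => hr (Finset.mem_range.mpr h)))
  rw [h1, ← Fin.sum_univ_eq_sum_range (fun r => sval A r) N]
  have h2 : ∀ j : Fin N, sval A ((j : ℕ)) = svalAux A j := by
    intro j; unfold sval; rw [dif_pos j.2]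
  rw [Finset.sum_congr rfl (fun j _ => h2 j)]
  calc ∑ j : Fin N, svalAux A j
      = ∑ j : Fin N, (fun i => Real.sqrt (((Matrix.isHermitian_transpose_mul_self A).eigenvalues ∘
          ⇑(Tuple.sort (Matrix.isHermitian_transpose_mul_self A).eigenvalues)) i))
          (Fin.revPerm j) := rfl
    _ = ∑ j : Fin N, (fun i => Real.sqrt (((Matrix.isHermitian_transpose_mul_self A).eigenvalues ∘
          ⇑(Tuple.sort (Matrix.isHermitian_transpose_mul_self A).eigenvalues)) i)) j :=
        Equiv.sum_comp Fin.revPerm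
          (fun i => Real.sqrt (((Matrix.isHermitian_transpose_mul_self A).eigenvalues ∘
            ⇑(Tuple.sort (Matrix.isHermitian_transpose_mul_self A).eigenvalues)) i))
    _ = ∑ j : Fin N, (fun i => Real.sqrt ((Matrix.isHermitian_transpose_mul_self A).eigenvalues i))
          ((Tuple.sort (Matrix.isHermitian_transpose_mul_self A).eigenvalues) j) := rfl
    _ = ∑ k : Fin N, Real.sqrt ((Matrix.isHermitian_transpose_mul_self A).eigenvalues k) :=
        Equiv.sum_comp (Tuple.sort (Matrix.isHermitian_transpose_mul_self A).eigenvalues)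
          (fun i => Real.sqrt ((Matrix.isHermitian_transpose_mul_self A).eigenvalues i))

end Part2

namespace Part3
open SoftThresh Part2

lemma sum_abs_le_nucNorm {M N : ℕ} (A : Matrix (Fin M) (Fin N) ℝ)
    (P : Matrix (Fin M) (Fin (min M N)) ℝ) (Q : Matrix (Fin N) (Fin (min M N)) ℝ)
    (hP : Pᵀ * P = 1) (hQ : Qᵀ * Q = 1) :
    ∑ r, |(Pᵀ * A * Q) r r| ≤ nucNorm A := by
  classical
  set hB := Matrix.isHermitian_transpose_mul_self A with hBdef
  set W : Matrix (Fin N) (Fin N) ℝ := (hB.eigenvectorUnitary : Matrix (Fin N) (Fin N) ℝ)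
    with hWd
  have hstar : star W = Wᵀ := by
    ext i j; simp [Matrix.star_apply, Matrix.transpose_apply]
  have hWW : W * Wᵀ = 1 := by
    have h := (Matrix.mem_unitaryGroup_iff).mp hB.eigenvectorUnitary.2
    rw [← hWd, hstar] at h
    exact h
  have hWW' : Wᵀ * W = 1 := by
    have h := (Matrix.mem_unitaryGroup_iff').mp hB.eigenvectorUnitary.2
    rw [← hWd, hstar] at h
    exact h
  set F : Matrix (Fin (min M N)) (Fin N) ℝ := Pᵀ * (A * W) with hF
  set G : Matrix (Fin N) (Fin (min M N)) ℝ := Wᵀ * Q with hG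
  have hPAQ : Pᵀ * A * Q = F * G := by
    rw [hF, hG]
    have : Pᵀ * (A * W) * (Wᵀ * Q) = Pᵀ * (A * (W * Wᵀ) * Q) := by
      simp only [Matrix.mul_assoc]
    rw [this, hWW, Matrix.mul_one, ← Matrix.mul_assoc]
  -- column norms of A * W
  have hAW : ∀ k, ∑ i, ((A * W) i k)^2 = hB.eigenvalues k := by
    intro k
    have h1 : ∑ i, ((A * W) i k)^2 = ((A * W)ᵀ * (A * W)) k k := by
      rw [Matrix.mul_apply]
      exact Finset.sum_congr rfl fun i _ => by rw [Matrix.transpose_apply]; ring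
    have hsp : Wᵀ * (Aᵀ * A) * W = Matrix.diagonal (RCLike.ofReal ∘ hB.eigenvalues) := by
      have h := hB.conjStarAlgAut_star_eigenvectorUnitary
      rw [Unitary.conjStarAlgAut_star_apply] at h
      rw [← hWd, hstar] at h
      exact h
    have hsp2 : (A * W)ᵀ * (A * W) = Matrix.diagonal (RCLike.ofReal ∘ hB.eigenvalues) := by
      rw [← hsp, Matrix.transpose_mul]
      simp only [Matrix.mul_assoc]
    rw [h1, hsp2]
    simp [Matrix.diagonal_apply]
  have hFb : ∀ k, ∑ r, (F r k)^2 ≤ hB.eigenvalues k := by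
    intro k
    have h1 : ∀ r, F r k = ∑ i, P i r * (A * W) i k := by
      intro r
      rw [hF, Matrix.mul_apply]
      exact Finset.sum_congr rfl fun i _ => by rw [Matrix.transpose_apply]
    calc ∑ r, (F r k)^2 = ∑ r, (∑ i, P i r * (A * W) i k)^2 :=
          Finset.sum_congr rfl fun r _ => by rw [h1]
      _ ≤ ∑ i, ((A * W) i k)^2 := proj_bound P hP _
      _ = hB.eigenvalues k := hAW k
  have hGb : ∀ k, ∑ r, (G k r)^2 ≤ 1 := by
    intro k
    have h1 : ∀ r, G k r = ∑ j, Q j r * W j k := by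
      intro r
      rw [hG, Matrix.mul_apply]
      exact Finset.sum_congr rfl fun j _ => by rw [Matrix.transpose_apply]; ring
    have h2 : ∑ j, (W j k)^2 = 1 := by
      have : (Wᵀ * W) k k = 1 := by rw [hWW']; simp
      rw [Matrix.mul_apply] at this
      rw [← this]
      exact Finset.sum_congr rfl fun j _ => by rw [Matrix.transpose_apply]; ring
    calc ∑ r, (G k r)^2 = ∑ r, (∑ j, Q j r * W j k)^2 :=
          Finset.sum_congr rfl fun r _ => by rw [h1]
      _ ≤ ∑ j, (W j k)^2 := proj_bound Q hQ _
      _ = 1 := h2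
  have hper : ∀ k, ∑ r, |F r k| * |G k r| ≤ Real.sqrt (hB.eigenvalues k) := by
    intro k
    have hcs := Finset.sum_mul_sq_le_sq_mul_sq Finset.univ (fun r => |F r k|) (fun r => |G k r|)
    simp only [sq_abs] at hcs
    have hnn : (0:ℝ) ≤ ∑ r, |F r k| * |G k r| :=
      Finset.sum_nonneg fun r _ => mul_nonneg (abs_nonneg _) (abs_nonneg _)
    rw [Real.le_sqrt hnn (eigs_nonneg A k)]
    calc (∑ r, |F r k| * |G k r|)^2 ≤ (∑ r, (F r k)^2) * (∑ r, (G k r)^2) := hcs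
      _ ≤ hB.eigenvalues k * 1 := by
          apply mul_le_mul (hFb k) (hGb k)
            (Finset.sum_nonneg fun r _ => sq_nonneg _) (eigs_nonneg A k)
      _ = hB.eigenvalues k := mul_one _
  calc ∑ r, |(Pᵀ * A * Q) r r| ≤ ∑ r, ∑ k, |F r k| * |G k r| := by
        refine Finset.sum_le_sum fun r _ => ?_
        rw [hPAQ, Matrix.mul_apply]
        refine (Finset.abs_sum_le_sum_abs _ _).trans (le_of_eq ?_)
        exact Finset.sum_congr rfl fun k _ => abs_mul _ _
    _ = ∑ k, ∑ r, |F r k| * |G k r| := Finset.sum_comm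
    _ ≤ ∑ k, Real.sqrt (hB.eigenvalues k) := Finset.sum_le_sum fun k _ => hper k
    _ = nucNorm A := (nucNorm_eq_sum_sqrt A).symm

end Part3

namespace Part4
open SoftThresh Part2 Part3

lemma triple_entry {M N K : ℕ} (U : Matrix (Fin M) (Fin K) ℝ) (B : Matrix (Fin M) (Fin N) ℝ)
    (V : Matrix (Fin N) (Fin K) ℝ) (r : Fin K) :
    (Uᵀ * B * V) r r = ∑ i, ∑ j, U i r * B i j * V j r := by
  rw [Matrix.mul_apply]
  calc ∑ j, (Uᵀ * B) r j * V j r = ∑ j, (∑ i, U i r * B i j) * V j r := by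
        refine Finset.sum_congr rfl fun j _ => ?_
        congr 1
    _ = ∑ j, ∑ i, U i r * B i j * V j r := by
        refine Finset.sum_congr rfl fun j _ => ?_
        rw [Finset.sum_mul]
    _ = ∑ i, ∑ j, U i r * B i j * V j r := Finset.sum_comm

lemma ip_left_svd {M N K : ℕ} (U : Matrix (Fin M) (Fin K) ℝ) (g : Fin K → ℝ)
    (V : Matrix (Fin N) (Fin K) ℝ) (B : Matrix (Fin M) (Fin N) ℝ) :
    ip (U * Matrix.diagonal g * Vᵀ) B = ∑ r, g r * (Uᵀ * B * V) r r := by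
  have hentry : ∀ i j, (U * Matrix.diagonal g * Vᵀ) i j = ∑ r, U i r * g r * V j r := by
    intro i j
    rw [Matrix.mul_apply]
    refine Finset.sum_congr rfl fun r _ => ?_
    rw [Matrix.mul_diagonal, Matrix.transpose_apply]
  unfold ip
  calc ∑ i, ∑ j, (U * Matrix.diagonal g * Vᵀ) i j * B i j
      = ∑ i, ∑ j, ∑ r, U i r * g r * V j r * B i j := by
        refine Finset.sum_congr rfl fun i _ => Finset.sum_congr rfl fun j _ => ?_
        rw [hentry, Finset.sum_mul]
    _ = ∑ i, ∑ r, ∑ j, U i r * g r * V j r * B i j :=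
        Finset.sum_congr rfl fun i _ => Finset.sum_comm
    _ = ∑ r, ∑ i, ∑ j, U i r * g r * V j r * B i j := Finset.sum_comm
    _ = ∑ r, g r * (Uᵀ * B * V) r r := by
        refine Finset.sum_congr rfl fun r _ => ?_
        rw [triple_entry, Finset.mul_sum]
        refine Finset.sum_congr rfl fun i _ => ?_
        rw [Finset.mul_sum]
        exact Finset.sum_congr rfl fun j _ => by ring

end Part4

/-- **Proposition 2 (singular value soft-thresholding).** Soft-thresholding the singular
values of `X` at level `lam` gives the unique global minimizer of the nuclear-norm
penalized least squares objective. -/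
theorem statement1 {M N : ℕ} (lam : ℝ) (hlam : 0 < lam)
    (X : Matrix (Fin M) (Fin N) ℝ)
    (U : Matrix (Fin M) (Fin (min M N)) ℝ) (V : Matrix (Fin N) (Fin (min M N)) ℝ)
    (D DS : Matrix (Fin (min M N)) (Fin (min M N)) ℝ)
    (hU : Uᵀ * U = 1) (hV : Vᵀ * V = 1)
    (hD : ∀ r s : Fin (min M N), D r s = if r = s then sval X (r : ℕ) else 0)
    (hX : X = U * D * Vᵀ)
    (hDS : ∀ r s : Fin (min M N),
      DS r s = if r = s then max (sval X (r : ℕ) - lam) 0 else 0)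
    (S : Matrix (Fin M) (Fin N) ℝ) (hS : S = U * DS * Vᵀ) :
    ∀ S' : Matrix (Fin M) (Fin N) ℝ, S' ≠ S →
      (1 / 2) * frobSq (X - S) + lam * nucNorm S
        < (1 / 2) * frobSq (X - S') + lam * nucNorm S' := by

  intro S' hS'
  set ds : Fin (min M N) → ℝ := fun r => max (sval X (r:ℕ) - lam) 0 with hds
  set g : Fin (min M N) → ℝ := fun r => sval X (r:ℕ) - ds r with hg
  have hDdiag : D = Matrix.diagonal (fun r : Fin (min M N) => sval X (r : ℕ)) := by
    ext r s; rw [hD r s, Matrix.diagonal_apply]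
  have hDSdiag : DS = Matrix.diagonal ds := by
    ext r s; rw [hDS r s, Matrix.diagonal_apply]
  have hds0 : ∀ r, 0 ≤ ds r := fun r => le_max_right _ _
  have hdsanti : Antitone ds := by
    intro r s hrs
    exact max_le_max (sub_le_sub_right (Part2.sval_antitone X hrs) lam) le_rfl
  have hXS : X - S = U * Matrix.diagonal g * Vᵀ := by
    have hdg : Matrix.diagonal (fun r : Fin (min M N) => sval X (r : ℕ)) - Matrix.diagonal ds
        = Matrix.diagonal g := by
      ext r s
      by_cases h : r = s <;> simp [Matrix.diagonal_apply, h, hg]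
    rw [hX, hS, hDdiag, hDSdiag, ← Matrix.sub_mul, ← Matrix.mul_sub, hdg]
  -- singular values of S
  have hSVD : Sᵀ * S = V * Matrix.diagonal (fun r => ds r * ds r) * Vᵀ := by
    rw [hS, hDSdiag]
    have h1 : (U * Matrix.diagonal ds * Vᵀ)ᵀ = V * (Matrix.diagonal ds * Uᵀ) := by
      rw [Matrix.transpose_mul, Matrix.transpose_mul, Matrix.transpose_transpose,
        Matrix.diagonal_transpose]
    rw [h1]
    calc V * (Matrix.diagonal ds * Uᵀ) * (U * Matrix.diagonal ds * Vᵀ)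
        = V * (Matrix.diagonal ds * ((Uᵀ * U) * (Matrix.diagonal ds * Vᵀ))) := by
          simp only [Matrix.mul_assoc]
      _ = V * (Matrix.diagonal ds * (Matrix.diagonal ds * Vᵀ)) := by
          rw [hU, Matrix.one_mul]
      _ = V * (Matrix.diagonal ds * Matrix.diagonal ds) * Vᵀ := by
          simp only [Matrix.mul_assoc]
      _ = V * Matrix.diagonal (fun r => ds r * ds r) * Vᵀ := by
          rw [Matrix.diagonal_mul_diagonal]
  have hsvalS : ∀ r : Fin (min M N), sval S (r:ℕ) = ds r := by
    intro r
    have hrN : (r:ℕ) < N := lt_of_lt_of_le r.2 (min_le_right M N)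
    have he0 : ∀ t, 0 ≤ ds t * ds t := fun t => mul_nonneg (hds0 t) (hds0 t)
    have heanti : Antitone (fun t => ds t * ds t) := by
      intro a b hab
      exact mul_le_mul (hdsanti hab) (hdsanti hab) (hds0 b) (hds0 a)
    have := Part2.svalAux_eq_pad S V (fun t => ds t * ds t) hV hSVD (min_le_right M N)
      he0 heanti ⟨(r:ℕ), hrN⟩
    show sval S (r:ℕ) = ds r
    unfold sval
    rw [dif_pos hrN, this]
    show Real.sqrt (if h : (r:ℕ) < min M N then ds ⟨(r:ℕ), h⟩ * ds ⟨(r:ℕ), h⟩ else 0) = ds r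
    rw [dif_pos r.2]
    exact Real.sqrt_mul_self (hds0 r)
  have hnucS : nucNorm S = ∑ r : Fin (min M N), ds r := by
    unfold nucNorm
    rw [← Fin.sum_univ_eq_sum_range (fun r => sval S r) (min M N)]
    exact Finset.sum_congr rfl fun r _ => hsvalS r
  have hUSV : Uᵀ * S * V = Matrix.diagonal ds := by
    rw [hS, hDSdiag]
    calc Uᵀ * (U * Matrix.diagonal ds * Vᵀ) * V
        = (Uᵀ * U) * (Matrix.diagonal ds * (Vᵀ * V)) := by simp only [Matrix.mul_assoc]
      _ = Matrix.diagonal ds := by rw [hU, hV, Matrix.one_mul, Matrix.mul_one]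
  -- inner products
  have hipGS : SoftThresh.ip (X - S) S = lam * nucNorm S := by
    rw [hXS, Part4.ip_left_svd, hUSV, hnucS, Finset.mul_sum]
    refine Finset.sum_congr rfl fun r _ => ?_
    rw [Matrix.diagonal_apply_eq]
    rcases le_or_gt (sval X (r:ℕ)) lam with h | h
    · have : ds r = 0 := max_eq_right (by linarith)
      rw [this]; ring
    · have h1 : ds r = sval X (r:ℕ) - lam := max_eq_left (by linarith)
      have h2 : g r = lam := by rw [hg]; simp only; rw [h1]; ring
      rw [h2]
  have hgb : ∀ r, 0 ≤ g r ∧ g r ≤ lam := by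
    intro r
    have h0 : 0 ≤ sval X (r:ℕ) := Part2.sval_nonneg X _
    rcases le_or_gt (sval X (r:ℕ)) lam with h | h
    · have : ds r = 0 := max_eq_right (by linarith)
      constructor <;> simp [hg, this] <;> linarith
    · have h1 : ds r = sval X (r:ℕ) - lam := max_eq_left (by linarith)
      constructor <;> simp [hg, h1] <;> linarith
  have hipGS' : SoftThresh.ip (X - S) S' ≤ lam * nucNorm S' := by
    rw [hXS, Part4.ip_left_svd]
    calc ∑ r, g r * (Uᵀ * S' * V) r r
        ≤ ∑ r, lam * |(Uᵀ * S' * V) r r| := by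
          refine Finset.sum_le_sum fun r _ => ?_
          calc g r * (Uᵀ * S' * V) r r ≤ g r * |(Uᵀ * S' * V) r r| :=
                mul_le_mul_of_nonneg_left (le_abs_self _) (hgb r).1
            _ ≤ lam * |(Uᵀ * S' * V) r r| :=
                mul_le_mul_of_nonneg_right (hgb r).2 (abs_nonneg _)
      _ = lam * ∑ r, |(Uᵀ * S' * V) r r| := (Finset.mul_sum _ _ _).symm
      _ ≤ lam * nucNorm S' :=
          mul_le_mul_of_nonneg_left (Part3.sum_abs_le_nucNorm S' U V hU hV) hlam.le
  have hexp : frobSq (X - S') = frobSq (X - S) + 2 * SoftThresh.ip (X - S) (S - S') + frobSq (S - S') := by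
    have h : X - S' = (X - S) + (S - S') := by abel
    rw [h]
    exact SoftThresh.frobSq_expand _ _
  have hsplit : SoftThresh.ip (X - S) (S - S') = SoftThresh.ip (X - S) S - SoftThresh.ip (X - S) S' := SoftThresh.ip_sub_right _ _ _
  have hpos : 0 < frobSq (S - S') := SoftThresh.frobSq_pos _ (sub_ne_zero.mpr (Ne.symm hS'))
  linarith
end
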